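/- Progress of casting: if the closed value v synthesizes type A and also checks against type B, then there exists v' such that v casts under B to v'. -/

import Mathlib

/-! Syntax of F_i+ types -/
inductive Ty : Type
  | tvar : ℕ → Ty
  | tint : Ty
  | ttop : Ty
  | tbot : Ty
  | and : Ty → Ty → Ty
  | arrow : Ty → Ty → Ty
  | all : ℕ → Ty → Ty → Ty   -- ∀(X * A). B
  | rcd : ℕ → Ty → Ty
  deriving DecidableEq

/-- Type contexts: lists of (type variable, disjointness bound), most recent first. -/
abbrev TCtx := List (ℕ × Ty)
/-- Term contexts. -/
abbrev Ctx := List (ℕ × Ty)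

/-- Type well-formedness Δ ⊢ A. -/
inductive WfTy : TCtx → Ty → Prop
  | tvar {Δ X A} : (X, A) ∈ Δ → WfTy Δ (.tvar X)
  | tint {Δ} : WfTy Δ .tint
  | ttop {Δ} : WfTy Δ .ttop
  | tbot {Δ} : WfTy Δ .tbot
  | and {Δ A B} : WfTy Δ A → WfTy Δ B → WfTy Δ (.and A B)
  | arrow {Δ A B} : WfTy Δ A → WfTy Δ B → WfTy Δ (.arrow A B)
  | all {Δ X A B} : WfTy Δ A → WfTy ((X, A) :: Δ) B → WfTy Δ (.all X A B)
  | rcd {Δ l A} : WfTy Δ A → WfTy Δ (.rcd l A)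

/-- Type context well-formedness ⊢ Δ. -/
inductive TCW : TCtx → Prop
  | nil : TCW []
  | cons {Δ X A} : TCW Δ → WfTy Δ A → X ∉ Δ.map Prod.fst → TCW ((X, A) :: Δ)

/-- Term context well-formedness Δ ⊢ Γ. -/
def CW (Δ : TCtx) (Γ : Ctx) : Prop := ∀ p ∈ Γ, WfTy Δ p.2

/-- Type splitting  B ◁ A ▷ C, written `Spl A B C`. -/
inductive Spl : Ty → Ty → Ty → Prop
  | and {A B} : Spl (.and A B) A B
  | arrow {A B B1 B2} : Spl B B1 B2 → Spl (.arrow A B) (.arrow A B1) (.arrow A B2)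
  | rcd {l A A1 A2} : Spl A A1 A2 → Spl (.rcd l A) (.rcd l A1) (.rcd l A2)
  | all {X A B B1 B2} : Spl B B1 B2 → Spl (.all X A B) (.all X A B1) (.all X A B2)

/-- Ordinary types: no positive occurrence of intersection. -/
inductive Ordinary : Ty → Prop
  | tvar {X} : Ordinary (.tvar X)
  | tint : Ordinary .tint
  | ttop : Ordinary .ttop
  | tbot : Ordinary .tbot
  | arrow {A B} : Ordinary B → Ordinary (.arrow A B)
  | all {X A B} : Ordinary B → Ordinary (.all X A B)
  | rcd {l A} : Ordinary A → Ordinary (.rcd l A)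

/-- Bottom-like types ⌋A⌊. -/
inductive BL : Ty → Prop
  | bot : BL .tbot
  | andl {A B} : BL A → BL (.and A B)
  | andr {A B} : BL B → BL (.and A B)

/-- Algorithmic top-like types Δ ⊢ ⌉A⌈. -/
inductive TL : TCtx → Ty → Prop
  | top {Δ} : TL Δ .ttop
  | and {Δ A B} : TL Δ A → TL Δ B → TL Δ (.and A B)
  | arrow {Δ A B} : TL Δ B → TL Δ (.arrow A B)
  | rcd {Δ l A} : TL Δ A → TL Δ (.rcd l A)
  | all {Δ X A B} : TL ((X, A) :: Δ) B → TL Δ (.all X A B)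
  | tvar {Δ X A} : (X, A) ∈ Δ → BL A → TL Δ (.tvar X)

/-- Declarative BCD-style subtyping Δ ⊢ A <: B of F_i+. -/
inductive DSub : TCtx → Ty → Ty → Prop
  | refl {Δ A} : DSub Δ A A
  | trans {Δ A B C} : DSub Δ A B → DSub Δ B C → DSub Δ A C
  | top {Δ A} : DSub Δ A .ttop
  | bot {Δ A} : DSub Δ .tbot A
  | and {Δ A B C} : DSub Δ A B → DSub Δ A C → DSub Δ A (.and B C)
  | andl {Δ A B} : DSub Δ (.and A B) A
  | andr {Δ A B} : DSub Δ (.and A B) B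
  | arrow {Δ A1 A2 B1 B2} : DSub Δ B1 A1 → DSub Δ A2 B2 →
      DSub Δ (.arrow A1 A2) (.arrow B1 B2)
  | distArrow {Δ A B C} : DSub Δ (.and (.arrow A B) (.arrow A C)) (.arrow A (.and B C))
  | topArrow {Δ} : DSub Δ .ttop (.arrow .ttop .ttop)
  | rcd {Δ l A B} : DSub Δ A B → DSub Δ (.rcd l A) (.rcd l B)
  | distRcd {Δ l A B} : DSub Δ (.and (.rcd l A) (.rcd l B)) (.rcd l (.and A B))
  | topRcd {Δ l} : DSub Δ .ttop (.rcd l .ttop)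
  | all {Δ X A1 A2 B1 B2} : DSub Δ B1 A1 → DSub ((X, B1) :: Δ) A2 B2 →
      DSub Δ (.all X A1 A2) (.all X B1 B2)
  | topAll {Δ X A} : DSub Δ .ttop (.all X A .ttop)
  | distAll {Δ X A B C} : DSub Δ (.and (.all X A B) (.all X A C)) (.all X A (.and B C))
  | topVar {Δ X A} : (X, A) ∈ Δ → DSub Δ A .tbot → DSub Δ .ttop (.tvar X)

/-- Algorithmic subtyping Δ ⊢ A ≤ B with splittable types. -/
inductive ASub : TCtx → Ty → Ty → Prop
  | and {Δ A B B1 B2} : Spl B B1 B2 → ASub Δ A B1 → ASub Δ A B2 → ASub Δ A B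
  | int {Δ} : ASub Δ .tint .tint
  | var {Δ X} : ASub Δ (.tvar X) (.tvar X)
  | bot {Δ B} : Ordinary B → ASub Δ .tbot B
  | top {Δ A B} : Ordinary B → TL Δ B → ASub Δ A B
  | andl {Δ A1 A2 B} : Ordinary B → ASub Δ A1 B → ASub Δ (.and A1 A2) B
  | andr {Δ A1 A2 B} : Ordinary B → ASub Δ A2 B → ASub Δ (.and A1 A2) B
  | arrow {Δ A1 A2 B1 B2} : Ordinary (.arrow B1 B2) → ASub Δ B1 A1 → ASub Δ A2 B2 →
      ASub Δ (.arrow A1 A2) (.arrow B1 B2)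
  | rcd {Δ l A B} : Ordinary (.rcd l B) → ASub Δ A B → ASub Δ (.rcd l A) (.rcd l B)
  | all {Δ X A1 A2 B1 B2} : Ordinary (.all X B1 B2) → ASub Δ B1 A1 →
      ASub ((X, B1) :: Δ) A2 B2 → ASub Δ (.all X A1 A2) (.all X B1 B2)

/-- Disjointness axioms for structurally different type constructors. -/
inductive DAx : Ty → Ty → Prop
  | intArrow {A B} : DAx .tint (.arrow A B)
  | intRcd {l A} : DAx .tint (.rcd l A)
  | intAll {X A B} : DAx .tint (.all X A B)
  | arrowRcd {A B l C} : DAx (.arrow A B) (.rcd l C)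
  | arrowAll {A B X C D} : DAx (.arrow A B) (.all X C D)
  | rcdAll {l A X B C} : DAx (.rcd l A) (.all X B C)
  | rcdNeq {l1 l2 A B} : l1 ≠ l2 → DAx (.rcd l1 A) (.rcd l2 B)
  | symm {A B} : DAx A B → DAx B A

/-- Algorithmic disjointness Δ ⊢ A * B. -/
inductive Disj : TCtx → Ty → Ty → Prop
  | topl {Δ A B} : TL Δ A → Disj Δ A B
  | topr {Δ A B} : TL Δ B → Disj Δ A B
  | varl {Δ X A B} : (X, A) ∈ Δ → ASub Δ A B → Disj Δ (.tvar X) B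
  | varr {Δ X A B} : (X, A) ∈ Δ → ASub Δ A B → Disj Δ B (.tvar X)
  | spll {Δ A A1 A2 B} : Spl A A1 A2 → Disj Δ A1 B → Disj Δ A2 B → Disj Δ A B
  | splr {Δ A B B1 B2} : Spl B B1 B2 → Disj Δ A B1 → Disj Δ A B2 → Disj Δ A B
  | arrow {Δ A1 A2 B1 B2} : Disj Δ A2 B2 → Disj Δ (.arrow A1 A2) (.arrow B1 B2)
  | rcd {Δ l A B} : Disj Δ A B → Disj Δ (.rcd l A) (.rcd l B)
  | all {Δ X A1 A2 B1 B2} : Disj ((X, .and A1 B1) :: Δ) A2 B2 →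
      Disj Δ (.all X A1 A2) (.all X B1 B2)
  | ax {Δ A B} : DAx A B → Disj Δ A B

/-- Substitution of type C for type variable X in a type. -/
def substTT (X : ℕ) (C : Ty) : Ty → Ty
  | .tvar Y => if Y = X then C else .tvar Y
  | .tint => .tint
  | .ttop => .ttop
  | .tbot => .tbot
  | .and A B => .and (substTT X C A) (substTT X C B)
  | .arrow A B => .arrow (substTT X C A) (substTT X C B)
  | .all Y A B => .all Y (substTT X C A) (if Y = X then B else substTT X C B)
  | .rcd l A => .rcd l (substTT X C A)

/-- Pointwise substitution in a type context. -/
def substCtx (X : ℕ) (C : Ty) (Δ : TCtx) : TCtx :=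
  Δ.map fun p => (p.1, substTT X C p.2)

/-! Expressions -/
inductive Exp : Type
  | evar : ℕ → Exp
  | lit : ℤ → Exp
  | etop : Exp
  | anno : Exp → Ty → Exp
  | merge : Exp → Exp → Exp
  | efix : ℕ → Ty → Exp → Exp
  | app : Exp → Exp → Exp
  | tapp : Exp → Ty → Exp
  | proj : Exp → ℕ → Exp
  | lam : ℕ → Ty → Exp → Exp
  | tabs : ℕ → Exp → Exp
  | rcd : ℕ → Exp → Exp
  deriving DecidableEq

/-- Checkable terms p: lambdas, type abstractions, records. -/
inductive Chk : Exp → Prop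
  | lam {x A e} : Chk (.lam x A e)
  | tabs {X e} : Chk (.tabs X e)
  | rcd {l e} : Chk (.rcd l e)

/-- Values. -/
inductive Value : Exp → Prop
  | chk {p} : Chk p → Value p
  | anno {p A} : Chk p → Value (.anno p A)
  | lit {i} : Value (.lit i)
  | top : Value .etop
  | merge {v1 v2} : Value v1 → Value v2 → Value (.merge v1 v2)

/-- Pre-values u. -/
inductive PVal : Exp → Prop
  | lit {i} : PVal (.lit i)
  | top : PVal .etop
  | anno {e A} : PVal (.anno e A)
  | merge {u1 u2} : PVal u1 → PVal u2 → PVal (.merge u1 u2)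

/-- Principal types of pre-values. -/
inductive PTyp : Exp → Ty → Prop
  | lit {i} : PTyp (.lit i) .tint
  | top : PTyp .etop .ttop
  | anno {e A} : PTyp (.anno e A) A
  | merge {u1 u2 A B} : PTyp u1 A → PTyp u2 B → PTyp (.merge u1 u2) (.and A B)

/-- Top-like value generator ⟦A⟧. -/
def TLVal : Ty → Exp
  | .ttop => .etop
  | .arrow A B => .anno (.lam 0 .ttop .etop) (.arrow A B)
  | .rcd l A => .anno (.rcd l .etop) (.rcd l A)
  | .all X A B => .anno (.tabs X .etop) (.all X A B)
  | _ => .etop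

/-- Consistency of pre-values u₁ ≈ u₂. -/
inductive Cons : Exp → Exp → Prop
  | lit {i} : Cons (.lit i) (.lit i)
  | top : Cons .etop .etop
  | anno {e A B} : Cons (.anno e A) (.anno e B)
  | disjoint {u1 u2 A B} : PTyp u1 A → PTyp u2 B → Disj [] A B → Cons u1 u2
  | mergel {u1 u2 u} : Cons u1 u → Cons u2 u → Cons (.merge u1 u2) u
  | merger {u u1 u2} : Cons u u1 → Cons u u2 → Cons u (.merge u1 u2)

/-- Applicative distribution A ▷ B. -/
inductive AppDist : Ty → Ty → Prop
  | refl {A} : AppDist A A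
  | arrow {A B A1 B1 A2 B2} : AppDist A (.arrow A1 B1) → AppDist B (.arrow A2 B2) →
      AppDist (.and A B) (.arrow (.and A1 A2) (.and B1 B2))
  | all {A B X A1 B1 A2 B2} : AppDist A (.all X A1 B1) → AppDist B (.all X A2 B2) →
      AppDist (.and A B) (.all X (.and A1 A2) (.and B1 B2))
  | rcd {A B l B1 B2} : AppDist A (.rcd l B1) → AppDist B (.rcd l B2) →
      AppDist (.and A B) (.rcd l (.and B1 B2))

/-- Typing modes. -/
inductive Mode | inf | chk

/-- Bidirectional typing Δ; Γ ⊢ e ⇔ A. -/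
inductive Typing : TCtx → Ctx → Exp → Mode → Ty → Prop
  | top {Δ Γ} : TCW Δ → CW Δ Γ → Typing Δ Γ .etop .inf .ttop
  | lit {Δ Γ i} : TCW Δ → CW Δ Γ → Typing Δ Γ (.lit i) .inf .tint
  | var {Δ Γ x A} : TCW Δ → CW Δ Γ → (x, A) ∈ Γ → Typing Δ Γ (.evar x) .inf A
  | abs {Δ Γ x A e B1 B2} : WfTy Δ A → DSub Δ B1 A →
      Typing Δ ((x, A) :: Γ) e .chk B2 → Typing Δ Γ (.lam x A e) .chk (.arrow B1 B2)
  | tabs {Δ Γ X A e B} : WfTy Δ A → Typing ((X, A) :: Δ) Γ e .chk B →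
      Typing Δ Γ (.tabs X e) .chk (.all X A B)
  | rcd {Δ Γ l e A} : Typing Δ Γ e .chk A → Typing Δ Γ (.rcd l e) .chk (.rcd l A)
  | app {Δ Γ e1 e2 A B C} : Typing Δ Γ e1 .inf A → AppDist A (.arrow B C) →
      Typing Δ Γ e2 .chk B → Typing Δ Γ (.app e1 e2) .inf C
  | tapp {Δ Γ e A X B C A'} : Typing Δ Γ e .inf A → AppDist A (.all X B C) →
      WfTy Δ A' → Disj Δ A' B → Typing Δ Γ (.tapp e A') .inf (substTT X A' C)
  | proj {Δ Γ e A l B} : Typing Δ Γ e .inf A → AppDist A (.rcd l B) →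
      Typing Δ Γ (.proj e l) .inf B
  | merge {Δ Γ e1 e2 A B} : Typing Δ Γ e1 .inf A → Typing Δ Γ e2 .inf B →
      Disj Δ A B → Typing Δ Γ (.merge e1 e2) .inf (.and A B)
  | mergev {Δ Γ u1 u2 A B} : PVal u1 → PVal u2 → Cons u1 u2 →
      Typing Δ Γ u1 .inf A → Typing Δ Γ u2 .inf B →
      Typing Δ Γ (.merge u1 u2) .inf (.and A B)
  | inter {Δ Γ e A B} : Typing Δ Γ e .chk A → Typing Δ Γ e .chk B →
      Typing Δ Γ e .chk (.and A B)
  | fix {Δ Γ x A e} : WfTy Δ A → Typing Δ ((x, A) :: Γ) e .chk A →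
      Typing Δ Γ (.efix x A e) .inf A
  | anno {Δ Γ e A} : WfTy Δ A → Typing Δ Γ e .chk A → Typing Δ Γ (.anno e A) .inf A
  | sub {Δ Γ e A B} : Typing Δ Γ e .inf A → DSub Δ A B → Typing Δ Γ e .chk B

/-- Substitution of type C for type variable X in an expression. -/
def substTE (X : ℕ) (C : Ty) : Exp → Exp
  | .evar x => .evar x
  | .lit i => .lit i
  | .etop => .etop
  | .anno e A => .anno (substTE X C e) (substTT X C A)
  | .merge e1 e2 => .merge (substTE X C e1) (substTE X C e2)
  | .efix x A e => .efix x (substTT X C A) (substTE X C e)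
  | .app e1 e2 => .app (substTE X C e1) (substTE X C e2)
  | .tapp e A => .tapp (substTE X C e) (substTT X C A)
  | .proj e l => .proj (substTE X C e) l
  | .lam x A e => .lam x (substTT X C A) (substTE X C e)
  | .tabs Y e => .tabs Y (if Y = X then e else substTE X C e)
  | .rcd l e => .rcd l (substTE X C e)

/-- Substitution of expression e' for term variable x in an expression. -/
def substEE (x : ℕ) (e' : Exp) : Exp → Exp
  | .evar y => if y = x then e' else .evar y
  | .lit i => .lit i
  | .etop => .etop
  | .anno e A => .anno (substEE x e' e) A
  | .merge e1 e2 => .merge (substEE x e' e1) (substEE x e' e2)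
  | .efix y A e => .efix y A (if y = x then e else substEE x e' e)
  | .app e1 e2 => .app (substEE x e' e1) (substEE x e' e2)
  | .tapp e A => .tapp (substEE x e' e) A
  | .proj e l => .proj (substEE x e' e) l
  | .lam y A e => .lam y A (if y = x then e else substEE x e' e)
  | .tabs Y e => .tabs Y (substEE x e' e)
  | .rcd l e => .rcd l (substEE x e' e)

/-- Casting v ↪_A v'. -/
inductive Cast : Exp → Ty → Exp → Prop
  | int {i} : Cast (.lit i) .tint (.lit i)
  | top {v A} : Ordinary A → TL [] A → Cast v A (TLVal A)
  | anno {p B A} : Chk p → Ordinary A → ¬ TL [] A → DSub [] B A →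
      Cast (.anno p B) A (.anno p A)
  | mergel {v1 v2 A v} : Ordinary A → Cast v1 A v → Cast (.merge v1 v2) A v
  | merger {v1 v2 A v} : Ordinary A → Cast v2 A v → Cast (.merge v1 v2) A v
  | and {v A A1 A2 v1 v2} : Spl A A1 A2 → Cast v A1 v1 → Cast v A2 v2 →
      Cast v A (.merge v1 v2)

/-- Expression wrapping e ↝_A u. -/
inductive Wrap : Exp → Ty → Exp → Prop
  | and {e A A1 A2 u1 u2} : Spl A A1 A2 → Wrap e A1 u1 → Wrap e A2 u2 →
      Wrap e A (.merge u1 u2)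
  | anno {e A} : Ordinary A → ¬ TL [] A → Wrap e A (.anno e A)
  | top {e A} : Ordinary A → TL [] A → Wrap e A (TLVal A)

/-- Arguments: expressions, types, or record labels. -/
inductive Arg : Type
  | exp : Exp → Arg
  | ty : Ty → Arg
  | lbl : ℕ → Arg

/-- Parallel application v • arg ↪ u. -/
inductive PApp : Exp → Arg → Exp → Prop
  | abs {x A e B C e' u} : Wrap e' A u →
      PApp (.anno (.lam x A e) (.arrow B C)) (.exp e') (.anno (substEE x u e) C)
  | tabs {X e A B C} :
      PApp (.anno (.tabs X e) (.all X A B)) (.ty C)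
        (.anno (substTE X C e) (substTT X C B))
  | proj {l e A} : PApp (.anno (.rcd l e) (.rcd l A)) (.lbl l) (.anno e A)
  | merge {v1 v2 arg u1 u2} : PApp v1 arg u1 → PApp v2 arg u2 →
      PApp (.merge v1 v2) arg (.merge u1 u2)

/-- Small-step call-by-name reduction e ↪ e'. -/
inductive Step : Exp → Exp → Prop
  | papp {v e u} : Value v → PApp v (.exp e) u → Step (.app v e) u
  | ptapp {v A u} : Value v → PApp v (.ty A) u → Step (.tapp v A) u
  | pproj {v l u} : Value v → PApp v (.lbl l) u → Step (.proj v l) u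
  | fix {x A e} : Step (.efix x A e) (.anno (substEE x (.efix x A e) e) A)
  | annov {v A v'} : Value v → PVal v → Cast v A v' → Step (.anno v A) v'
  | appl {e1 e1' e2} : Step e1 e1' → Step (.app e1 e2) (.app e1' e2)
  | tappl {e e' A} : Step e e' → Step (.tapp e A) (.tapp e' A)
  | projl {e e' l} : Step e e' → Step (.proj e l) (.proj e' l)
  | anno {e e' A} : Step e e' → Step (.anno e A) (.anno e' A)
  | merge {e1 e1' e2 e2'} : Step e1 e1' → Step e2 e2' →
      Step (.merge e1 e2) (.merge e1' e2')
  | mergel {e1 e1' v2} : Step e1 e1' → Value v2 → Step (.merge e1 v2) (.merge e1' v2)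
  | merger {v1 e2 e2'} : Value v1 → Step e2 e2' → Step (.merge v1 e2) (.merge v1 e2')

/-- Isomorphic subtyping A ≲ B. -/
inductive IsoSub : Ty → Ty → Prop
  | refl {A} : IsoSub A A
  | and {A1 A2 B B1 B2} : Spl B B1 B2 → IsoSub A1 B1 → IsoSub A2 B2 →
      IsoSub (.and A1 A2) B

/-! ### Auxiliary development for casting progress -/

def tsize : Ty → ℕ
  | .tvar _ => 1
  | .tint => 1
  | .ttop => 1
  | .tbot => 1
  | .and A B => 1 + tsize A + tsize B
  | .arrow A B => 1 + tsize A + tsize B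
  | .all _ A B => 1 + tsize A + tsize B
  | .rcd _ A => 1 + tsize A

theorem tsize_pos (A : Ty) : 1 ≤ tsize A := by
  cases A <;> simp [tsize] <;> omega

def esize : Exp → ℕ
  | .merge e1 e2 => 1 + esize e1 + esize e2
  | _ => 1

theorem esize_pos (e : Exp) : 1 ≤ esize e := by
  cases e <;> simp [esize]
  omega

theorem spl_size {A A1 A2 : Ty} (h : Spl A A1 A2) :
    tsize A1 < tsize A ∧ tsize A2 < tsize A := by
  induction h with
  | @and A B => have := tsize_pos A; have := tsize_pos B; simp [tsize]; omega
  | @arrow A B B1 B2 _ ih => simp [tsize]; omega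
  | @rcd l A A1 A2 _ ih => simp [tsize]; omega
  | @all X A B B1 B2 _ ih => simp [tsize]; omega

theorem spl_ord {A A1 A2 : Ty} (h : Spl A A1 A2) : ¬ Ordinary A := by
  induction h with
  | and => intro ho; nomatch ho
  | arrow _ ih => intro ho; cases ho with | arrow hb => exact ih hb
  | rcd _ ih => intro ho; cases ho with | rcd hb => exact ih hb
  | all _ ih => intro ho; cases ho with | all hb => exact ih hb

theorem spl_det {A A1 A2 : Ty} (h1 : Spl A A1 A2) :
    ∀ {B1 B2}, Spl A B1 B2 → A1 = B1 ∧ A2 = B2 := by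
  induction h1 with
  | and => intro B1 B2 h2; cases h2; exact ⟨rfl, rfl⟩
  | arrow _ ih =>
    intro B1 B2 h2
    cases h2 with
    | arrow s' => obtain ⟨e1, e2⟩ := ih s'; subst e1; subst e2; exact ⟨rfl, rfl⟩
  | rcd _ ih =>
    intro B1 B2 h2
    cases h2 with
    | rcd s' => obtain ⟨e1, e2⟩ := ih s'; subst e1; subst e2; exact ⟨rfl, rfl⟩
  | all _ ih =>
    intro B1 B2 h2
    cases h2 with
    | all s' => obtain ⟨e1, e2⟩ := ih s'; subst e1; subst e2; exact ⟨rfl, rfl⟩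

theorem ord_or_spl (A : Ty) : Ordinary A ∨ ∃ A1 A2, Spl A A1 A2 := by
  induction A with
  | tvar X => exact .inl .tvar
  | tint => exact .inl .tint
  | ttop => exact .inl .ttop
  | tbot => exact .inl .tbot
  | and A B _ _ => exact .inr ⟨A, B, .and⟩
  | arrow A B _ ihB =>
    rcases ihB with h | ⟨B1, B2, sp⟩
    · exact .inl (.arrow h)
    · exact .inr ⟨_, _, .arrow sp⟩
  | all X A B _ ihB =>
    rcases ihB with h | ⟨B1, B2, sp⟩
    · exact .inl (.all h)
    · exact .inr ⟨_, _, .all sp⟩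
  | rcd l A ihA =>
    rcases ihA with h | ⟨A1, A2, sp⟩
    · exact .inl (.rcd h)
    · exact .inr ⟨_, _, .rcd sp⟩

theorem tl_spl {A A1 A2 : Ty} (sp : Spl A A1 A2) :
    ∀ {Δ}, TL Δ A → TL Δ A1 ∧ TL Δ A2 := by
  induction sp with
  | and => intro Δ h; cases h with | and h1 h2 => exact ⟨h1, h2⟩
  | arrow _ ih =>
    intro Δ h; cases h with
    | arrow hb => obtain ⟨x, y⟩ := ih hb; exact ⟨.arrow x, .arrow y⟩
  | rcd _ ih =>
    intro Δ h; cases h with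
    | rcd hb => obtain ⟨x, y⟩ := ih hb; exact ⟨.rcd x, .rcd y⟩
  | all _ ih =>
    intro Δ h; cases h with
    | all hb => obtain ⟨x, y⟩ := ih hb; exact ⟨.all x, .all y⟩

theorem tl_spl' {A A1 A2 : Ty} (sp : Spl A A1 A2) :
    ∀ {Δ}, TL Δ A1 → TL Δ A2 → TL Δ A := by
  induction sp with
  | and => intro Δ h1 h2; exact .and h1 h2
  | arrow _ ih =>
    intro Δ h1 h2
    cases h1 with | arrow x => cases h2 with | arrow y => exact .arrow (ih x y)
  | rcd _ ih =>
    intro Δ h1 h2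
    cases h1 with | rcd x => cases h2 with | rcd y => exact .rcd (ih x y)
  | all _ ih =>
    intro Δ h1 h2
    cases h1 with | all x => cases h2 with | all y => exact .all (ih x y)

theorem bl_spl {A A1 A2 : Ty} (sp : Spl A A1 A2) (h : BL A) : BL A1 ∨ BL A2 := by
  cases sp with
  | and => cases h with
    | andl h => exact .inl h
    | andr h => exact .inr h
  | arrow _ => nomatch h
  | rcd _ => nomatch h
  | all _ => nomatch h

/-- Context relation: each binding is covered by one with the same name whose
bound is bottom-like whenever the original one is. -/
def CtxLE (Δ Δ' : TCtx) : Prop :=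
  ∀ Y C, (Y, C) ∈ Δ → ∃ C', (Y, C') ∈ Δ' ∧ (BL C → BL C')

theorem ctxle_ext {Δ Δ' : TCtx} (h : CtxLE Δ Δ') (X : ℕ) (A : Ty) :
    CtxLE ((X, A) :: Δ) ((X, A) :: Δ') := by
  intro Y C hm
  rcases List.mem_cons.mp hm with h' | h'
  · cases h'; exact ⟨A, List.mem_cons_self, fun x => x⟩
  · obtain ⟨C', hm', f⟩ := h Y C h'
    exact ⟨C', List.mem_cons_of_mem _ hm', f⟩

theorem ctx_narrow {Δ : TCtx} {X : ℕ} {A B : Ty} (h : BL A → BL B) :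
    CtxLE ((X, A) :: Δ) ((X, B) :: Δ) := by
  intro Y C hm
  rcases List.mem_cons.mp hm with h' | h'
  · cases h'; exact ⟨B, List.mem_cons_self, h⟩
  · exact ⟨C, List.mem_cons_of_mem _ h', fun x => x⟩

theorem tl_mono : ∀ {Δ A}, TL Δ A → ∀ {Δ'}, CtxLE Δ Δ' → TL Δ' A := by
  intro Δ A h
  induction h with
  | top => intro Δ' _; exact .top
  | and _ _ ih1 ih2 => intro Δ' hc; exact .and (ih1 hc) (ih2 hc)
  | arrow _ ih => intro Δ' hc; exact .arrow (ih hc)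
  | rcd _ ih => intro Δ' hc; exact .rcd (ih hc)
  | @all Δ X A B _ ih => intro Δ' hc; exact .all (ih (ctxle_ext hc X A))
  | tvar hm hbl =>
    intro Δ' hc
    obtain ⟨C', hm', f⟩ := hc _ _ hm
    exact .tvar hm' (f hbl)

theorem asub_mono : ∀ {Δ A B}, ASub Δ A B → ∀ {Δ'}, CtxLE Δ Δ' → ASub Δ' A B := by
  intro Δ A B h
  induction h with
  | and sp _ _ ih1 ih2 => intro Δ' hc; exact .and sp (ih1 hc) (ih2 hc)
  | int => intro Δ' _; exact .int
  | var => intro Δ' _; exact .var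
  | bot ho => intro Δ' _; exact .bot ho
  | top ho htl => intro Δ' hc; exact .top ho (tl_mono htl hc)
  | andl ho _ ih => intro Δ' hc; exact .andl ho (ih hc)
  | andr ho _ ih => intro Δ' hc; exact .andr ho (ih hc)
  | arrow ho _ _ ih1 ih2 => intro Δ' hc; exact .arrow ho (ih1 hc) (ih2 hc)
  | rcd ho _ ih => intro Δ' hc; exact .rcd ho (ih hc)
  | @all Δ X A1 A2 B1 B2 ho _ _ ih1 ih2 =>
    intro Δ' hc; exact .all ho (ih1 hc) (ih2 (ctxle_ext hc X B1))

theorem asub_bl : ∀ {Δ A B}, ASub Δ A B → BL B → BL A := by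
  intro Δ A B h
  induction h with
  | and sp _ _ ih1 ih2 =>
    intro hbl
    rcases bl_spl sp hbl with h | h
    · exact ih1 h
    · exact ih2 h
  | int => intro hbl; nomatch hbl
  | var => intro hbl; nomatch hbl
  | bot _ => intro _; exact .bot
  | top ho htl =>
    intro hbl
    exfalso
    cases hbl with
    | bot => nomatch htl
    | andl _ => nomatch ho
    | andr _ => nomatch ho
  | andl _ _ ih => intro hbl; exact .andl (ih hbl)
  | andr _ _ ih => intro hbl; exact .andr (ih hbl)
  | arrow _ _ _ _ _ => intro hbl; nomatch hbl
  | rcd _ _ _ => intro hbl; nomatch hbl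
  | all _ _ _ _ _ => intro hbl; nomatch hbl

theorem tl_pres : ∀ {Δ B C}, ASub Δ B C → TL Δ B → TL Δ C := by
  intro Δ B C h
  induction h with
  | and sp _ _ ih1 ih2 => intro h; exact tl_spl' sp (ih1 h) (ih2 h)
  | int => intro h; exact h
  | var => intro h; exact h
  | bot _ => intro h; nomatch h
  | top _ htl => intro _; exact htl
  | andl _ _ ih => intro h; cases h with | and ha hb => exact ih ha
  | andr _ _ ih => intro h; cases h with | and ha hb => exact ih hb
  | arrow _ _ _ _ ih2 => intro h; cases h with | arrow hb => exact .arrow (ih2 hb)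
  | rcd _ _ ih => intro h; cases h with | rcd hb => exact .rcd (ih hb)
  | all _ s1 _ _ ih2 =>
    intro h
    cases h with
    | all hb => exact .all (ih2 (tl_mono hb (ctx_narrow (asub_bl s1))))

theorem and_inv {Δ : TCtx} {A B B1 B2 : Ty} (h : ASub Δ A B) (sp : Spl B B1 B2) :
    ASub Δ A B1 ∧ ASub Δ A B2 := by
  cases h with
  | and sp' h1 h2 =>
    obtain ⟨e1, e2⟩ := spl_det sp' sp
    subst e1; subst e2; exact ⟨h1, h2⟩
  | int => nomatch sp
  | var => nomatch sp
  | bot ho => exact absurd ho (spl_ord sp)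
  | top ho _ => exact absurd ho (spl_ord sp)
  | andl ho _ => exact absurd ho (spl_ord sp)
  | andr ho _ => exact absurd ho (spl_ord sp)
  | arrow ho _ _ => exact absurd ho (spl_ord sp)
  | rcd ho _ => exact absurd ho (spl_ord sp)
  | all ho _ _ => exact absurd ho (spl_ord sp)

theorem spl_left : ∀ {Δ A1 B}, ASub Δ A1 B → ∀ {A A2}, Spl A A1 A2 → ASub Δ A B := by
  intro Δ A1 B h
  induction h with
  | and spB _ _ ih1 ih2 => intro A A2 sp; exact .and spB (ih1 sp) (ih2 sp)
  | int => intro A A2 sp; cases sp with | and => exact .andl .tint .int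
  | var => intro A A2 sp; cases sp with | and => exact .andl .tvar .var
  | bot ho => intro A A2 sp; cases sp with | and => exact .andl ho (.bot ho)
  | top ho htl => intro A A2 sp; exact .top ho htl
  | andl ho h => intro A A2 sp; cases sp with | and => exact .andl ho (.andl ho h)
  | andr ho h => intro A A2 sp; cases sp with | and => exact .andl ho (.andr ho h)
  | arrow ho s1 s2 ih1 ih2 =>
    intro A A2 sp
    cases sp with
    | and => exact .andl ho (.arrow ho s1 s2)
    | arrow sp' => exact .arrow ho s1 (ih2 sp')
  | rcd ho s ih =>
    intro A A2 sp
    cases sp with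
    | and => exact .andl ho (.rcd ho s)
    | rcd sp' => exact .rcd ho (ih sp')
  | all ho s1 s2 ih1 ih2 =>
    intro A A2 sp
    cases sp with
    | and => exact .andl ho (.all ho s1 s2)
    | all sp' => exact .all ho s1 (ih2 sp')

theorem spl_right : ∀ {Δ A2 B}, ASub Δ A2 B → ∀ {A A1}, Spl A A1 A2 → ASub Δ A B := by
  intro Δ A2 B h
  induction h with
  | and spB _ _ ih1 ih2 => intro A A1 sp; exact .and spB (ih1 sp) (ih2 sp)
  | int => intro A A1 sp; cases sp with | and => exact .andr .tint .int
  | var => intro A A1 sp; cases sp with | and => exact .andr .tvar .var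
  | bot ho => intro A A1 sp; cases sp with | and => exact .andr ho (.bot ho)
  | top ho htl => intro A A1 sp; exact .top ho htl
  | andl ho h => intro A A1 sp; cases sp with | and => exact .andr ho (.andl ho h)
  | andr ho h => intro A A1 sp; cases sp with | and => exact .andr ho (.andr ho h)
  | arrow ho s1 s2 ih1 ih2 =>
    intro A A1 sp
    cases sp with
    | and => exact .andr ho (.arrow ho s1 s2)
    | arrow sp' => exact .arrow ho s1 (ih2 sp')
  | rcd ho s ih =>
    intro A A1 sp
    cases sp with
    | and => exact .andr ho (.rcd ho s)
    | rcd sp' => exact .rcd ho (ih sp')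
  | all ho s1 s2 ih1 ih2 =>
    intro A A1 sp
    cases sp with
    | and => exact .andr ho (.all ho s1 s2)
    | all sp' => exact .all ho s1 (ih2 sp')

theorem arrow_mono_aux :
    ∀ n {Δ A1 A2 B1 B2}, ASub Δ B1 A1 → ASub Δ A2 B2 → tsize B2 ≤ n →
      ASub Δ (.arrow A1 A2) (.arrow B1 B2) := by
  intro n
  induction n with
  | zero => intro Δ A1 A2 B1 B2 _ _ hsz; have := tsize_pos B2; omega
  | succ n ih =>
    intro Δ A1 A2 B1 B2 h1 h2 hsz
    rcases ord_or_spl B2 with ho | ⟨s1, s2, sp⟩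
    · exact .arrow (.arrow ho) h1 h2
    · obtain ⟨d1, d2⟩ := and_inv h2 sp
      have hs := spl_size sp
      exact .and (.arrow sp) (ih h1 d1 (by omega)) (ih h1 d2 (by omega))

theorem rcd_mono_aux :
    ∀ n {Δ l A B}, ASub Δ A B → tsize B ≤ n → ASub Δ (.rcd l A) (.rcd l B) := by
  intro n
  induction n with
  | zero => intro Δ l A B _ hsz; have := tsize_pos B; omega
  | succ n ih =>
    intro Δ l A B h hsz
    rcases ord_or_spl B with ho | ⟨s1, s2, sp⟩
    · exact .rcd (.rcd ho) h
    · obtain ⟨d1, d2⟩ := and_inv h sp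
      have hs := spl_size sp
      exact .and (.rcd sp) (ih d1 (by omega)) (ih d2 (by omega))

theorem all_mono_aux :
    ∀ n {Δ X A1 A2 B1 B2}, ASub Δ B1 A1 → ASub ((X, B1) :: Δ) A2 B2 → tsize B2 ≤ n →
      ASub Δ (.all X A1 A2) (.all X B1 B2) := by
  intro n
  induction n with
  | zero => intro Δ X A1 A2 B1 B2 _ _ hsz; have := tsize_pos B2; omega
  | succ n ih =>
    intro Δ X A1 A2 B1 B2 h1 h2 hsz
    rcases ord_or_spl B2 with ho | ⟨s1, s2, sp⟩
    · exact .all (.all ho) h1 h2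
    · obtain ⟨d1, d2⟩ := and_inv h2 sp
      have hs := spl_size sp
      exact .and (.all sp) (ih h1 d1 (by omega)) (ih h1 d2 (by omega))

theorem asub_refl : ∀ (A : Ty) (Δ : TCtx), ASub Δ A A
  | .tvar _, _ => .var
  | .tint, _ => .int
  | .ttop, _ => .top .ttop .top
  | .tbot, _ => .bot .tbot
  | .and A B, Δ =>
      .and .and (spl_left (asub_refl A Δ) .and) (spl_right (asub_refl B Δ) .and)
  | .arrow A B, Δ => arrow_mono_aux (tsize B) (asub_refl A Δ) (asub_refl B Δ) le_rfl
  | .rcd _ A, Δ => rcd_mono_aux (tsize A) (asub_refl A Δ) le_rfl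
  | .all X A B, Δ =>
      all_mono_aux (tsize B) (asub_refl A Δ) (asub_refl B ((X, A) :: Δ)) le_rfl

theorem toplike_sub :
    ∀ n {Δ A B}, TL Δ B → tsize B ≤ n → ASub Δ A B := by
  intro n
  induction n with
  | zero => intro Δ A B _ hsz; have := tsize_pos B; omega
  | succ n ih =>
    intro Δ A B htl hsz
    rcases ord_or_spl B with ho | ⟨s1, s2, sp⟩
    · exact .top ho htl
    · obtain ⟨t1, t2⟩ := tl_spl sp htl
      have hs := spl_size sp
      exact .and sp (ih t1 (by omega)) (ih t2 (by omega))

theorem bl_sub_ord {A : Ty} (h : BL A) : ∀ {Δ B}, Ordinary B → ASub Δ A B := by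
  induction h with
  | bot => intro Δ B ho; exact .bot ho
  | andl _ ih => intro Δ B ho; exact .andl ho (ih ho)
  | andr _ ih => intro Δ B ho; exact .andr ho (ih ho)

theorem bl_sub : ∀ n {Δ A B}, BL A → tsize B ≤ n → ASub Δ A B := by
  intro n
  induction n with
  | zero => intro Δ A B _ hsz; have := tsize_pos B; omega
  | succ n ih =>
    intro Δ A B hbl hsz
    rcases ord_or_spl B with ho | ⟨s1, s2, sp⟩
    · exact bl_sub_ord hbl ho
    · have hs := spl_size sp
      exact .and sp (ih hbl (by omega)) (ih hbl (by omega))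

theorem spl_inv :
    ∀ {Δ B C}, ASub Δ B C → ∀ {B1 B2}, Spl B B1 B2 → Ordinary C →
      ASub Δ B1 C ∨ ASub Δ B2 C ∨ TL Δ C := by
  intro Δ B C h
  induction h with
  | and spC _ _ _ _ => intro B1 B2 sp hoC; exact absurd hoC (spl_ord spC)
  | int => intro B1 B2 sp _; nomatch sp
  | var => intro B1 B2 sp _; nomatch sp
  | bot _ => intro B1 B2 sp _; nomatch sp
  | top _ htl => intro B1 B2 sp _; exact .inr (.inr htl)
  | andl _ h => intro B1 B2 sp _; cases sp with | and => exact .inl h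
  | andr _ h => intro B1 B2 sp _; cases sp with | and => exact .inr (.inl h)
  | arrow ho s1 s2 _ ih2 =>
    intro B1 B2 sp hoC
    cases sp with
    | arrow sp' =>
      cases ho with
      | arrow hob =>
        rcases ih2 sp' hob with h | h | h
        · exact .inl (.arrow hoC s1 h)
        · exact .inr (.inl (.arrow hoC s1 h))
        · exact .inr (.inr (.arrow h))
  | rcd ho s ih =>
    intro B1 B2 sp hoC
    cases sp with
    | rcd sp' =>
      cases ho with
      | rcd hob =>
        rcases ih sp' hob with h | h | h
        · exact .inl (.rcd hoC h)
        · exact .inr (.inl (.rcd hoC h))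
        · exact .inr (.inr (.rcd h))
  | all ho s1 s2 _ ih2 =>
    intro B1 B2 sp hoC
    cases sp with
    | all sp' =>
      cases ho with
      | all hob =>
        rcases ih2 sp' hob with h | h | h
        · exact .inl (.all hoC s1 h)
        · exact .inr (.inl (.all hoC s1 h))
        · exact .inr (.inr (.all h))

theorem asub_trans_aux :
    ∀ n {Δ A B C}, ASub Δ A B → ASub Δ B C →
      tsize A + tsize B + tsize C ≤ n → ASub Δ A C := by
  intro n
  induction n with
  | zero =>
    intro Δ A B C _ _ hsz
    have := tsize_pos A; have := tsize_pos B; have := tsize_pos C; omega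
  | succ n ih =>
    intro Δ A B C D1 D2 hsz
    rcases ord_or_spl C with hC | ⟨C1, C2, spC⟩
    · rcases ord_or_spl B with hB | ⟨B1, B2, spB⟩
      · -- B and C ordinary
        cases D2 with
        | and spC' _ _ => exact absurd hC (spl_ord spC')
        | int => exact D1
        | var => exact D1
        | bot _ => exact bl_sub_ord (asub_bl D1 .bot) hC
        | top hoC htl => exact .top hoC htl
        | andl _ _ => nomatch hB
        | andr _ _ => nomatch hB
        | @arrow _ b1 b2 c1 c2 hoC s1 s2 =>
          cases D1 with
          | and spB' _ _ => exact absurd hB (spl_ord spB')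
          | bot _ => exact .bot hC
          | top hoB htlB =>
            cases htlB with
            | arrow htl2 => exact .top hC (.arrow (tl_pres s2 htl2))
          | @andl _ Aa Ab _ _ h =>
            have hAb := tsize_pos Ab
            have : tsize Aa + tsize (Ty.arrow b1 b2) + tsize (Ty.arrow c1 c2) ≤ n := by
              simp [tsize] at hsz ⊢; omega
            exact .andl hC (ih h (.arrow hoC s1 s2) this)
          | @andr _ Aa Ab _ _ h =>
            have hAa := tsize_pos Aa
            have : tsize Ab + tsize (Ty.arrow b1 b2) + tsize (Ty.arrow c1 c2) ≤ n := by
              simp [tsize] at hsz ⊢; omega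
            exact .andr hC (ih h (.arrow hoC s1 s2) this)
          | @arrow _ a1 a2 _ _ hoB t1 t2 =>
            have e1 : ASub Δ c1 a1 := by
              apply ih s1 t1; simp [tsize] at hsz ⊢; omega
            have e2 : ASub Δ a2 c2 := by
              apply ih t2 s2; simp [tsize] at hsz ⊢; omega
            exact .arrow hC e1 e2
        | @rcd _ l b c hoC s =>
          cases D1 with
          | and spB' _ _ => exact absurd hB (spl_ord spB')
          | bot _ => exact .bot hC
          | top hoB htlB =>
            cases htlB with
            | rcd htl2 => exact .top hC (.rcd (tl_pres s htl2))
          | @andl _ Aa Ab _ _ h =>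
            have hAb := tsize_pos Ab
            have : tsize Aa + tsize (Ty.rcd l b) + tsize (Ty.rcd l c) ≤ n := by
              simp [tsize] at hsz ⊢; omega
            exact .andl hC (ih h (.rcd hoC s) this)
          | @andr _ Aa Ab _ _ h =>
            have hAa := tsize_pos Aa
            have : tsize Ab + tsize (Ty.rcd l b) + tsize (Ty.rcd l c) ≤ n := by
              simp [tsize] at hsz ⊢; omega
            exact .andr hC (ih h (.rcd hoC s) this)
          | @rcd _ _ a _ hoB t =>
            have e : ASub Δ a c := by
              apply ih t s; simp [tsize] at hsz ⊢; omega
            exact .rcd hC e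
        | @all _ X b1 b2 c1 c2 hoC s1 s2 =>
          cases D1 with
          | and spB' _ _ => exact absurd hB (spl_ord spB')
          | bot _ => exact .bot hC
          | top hoB htlB =>
            cases htlB with
            | all htl2 =>
              have htl2' : TL ((X, c1) :: Δ) b2 :=
                tl_mono htl2 (ctx_narrow (asub_bl s1))
              exact .top hC (.all (tl_pres s2 htl2'))
          | @andl _ Aa Ab _ _ h =>
            have hAb := tsize_pos Ab
            have : tsize Aa + tsize (Ty.all X b1 b2) + tsize (Ty.all X c1 c2) ≤ n := by
              simp [tsize] at hsz ⊢; omega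
            exact .andl hC (ih h (.all hoC s1 s2) this)
          | @andr _ Aa Ab _ _ h =>
            have hAa := tsize_pos Aa
            have : tsize Ab + tsize (Ty.all X b1 b2) + tsize (Ty.all X c1 c2) ≤ n := by
              simp [tsize] at hsz ⊢; omega
            exact .andr hC (ih h (.all hoC s1 s2) this)
          | @all _ _ a1 a2 _ _ hoB t1 t2 =>
            have e1 : ASub Δ c1 a1 := by
              apply ih s1 t1; simp [tsize] at hsz ⊢; omega
            have t2' : ASub ((X, c1) :: Δ) a2 b2 :=
              asub_mono t2 (ctx_narrow (asub_bl s1))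
            have e2 : ASub ((X, c1) :: Δ) a2 c2 := by
              apply ih t2' s2; simp [tsize] at hsz ⊢; omega
            exact .all hC e1 e2
      · -- B splits
        obtain ⟨d1, d2⟩ := and_inv D1 spB
        have hs := spl_size spB
        rcases spl_inv D2 spB hC with h | h | h
        · exact ih d1 h (by omega)
        · exact ih d2 h (by omega)
        · exact .top hC h
    · -- C splits
      obtain ⟨d1, d2⟩ := and_inv D2 spC
      have hs := spl_size spC
      exact .and spC (ih D1 d1 (by omega)) (ih D1 d2 (by omega))

theorem asub_trans {Δ : TCtx} {A B C : Ty}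
    (h1 : ASub Δ A B) (h2 : ASub Δ B C) : ASub Δ A C :=
  asub_trans_aux (tsize A + tsize B + tsize C) h1 h2 le_rfl

/-- Completeness of algorithmic subtyping. -/
theorem dsub_asub : ∀ {Δ A B}, DSub Δ A B → ASub Δ A B := by
  intro Δ A B h
  induction h with
  | refl => exact asub_refl _ _
  | trans _ _ ih1 ih2 => exact asub_trans ih1 ih2
  | top => exact toplike_sub _ .top le_rfl
  | bot => exact bl_sub _ .bot le_rfl
  | and _ _ ih1 ih2 => exact .and .and ih1 ih2
  | andl => exact spl_left (asub_refl _ _) .and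
  | andr => exact spl_right (asub_refl _ _) .and
  | arrow _ _ ih1 ih2 => exact arrow_mono_aux _ ih1 ih2 le_rfl
  | distArrow =>
    exact .and (.arrow .and) (spl_left (asub_refl _ _) .and)
      (spl_right (asub_refl _ _) .and)
  | topArrow => exact toplike_sub _ (.arrow .top) le_rfl
  | rcd _ ih => exact rcd_mono_aux _ ih le_rfl
  | distRcd =>
    exact .and (.rcd .and) (spl_left (asub_refl _ _) .and)
      (spl_right (asub_refl _ _) .and)
  | topRcd => exact toplike_sub _ (.rcd .top) le_rfl
  | all _ _ ih1 ih2 => exact all_mono_aux _ ih1 ih2 le_rfl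
  | topAll => exact toplike_sub _ (.all .top) le_rfl
  | distAll =>
    exact .and (.all .and) (spl_left (asub_refl _ _) .and)
      (spl_right (asub_refl _ _) .and)
  | topVar hm _ ih => exact .top .tvar (.tvar hm (asub_bl ih .bot))

theorem bl_dsub {Δ : TCtx} {A : Ty} (h : BL A) : DSub Δ A .tbot := by
  induction h with
  | bot => exact .refl
  | andl _ ih => exact .trans .andl ih
  | andr _ ih => exact .trans .andr ih

theorem tl_dsub : ∀ {Δ B}, TL Δ B → DSub Δ .ttop B := by
  intro Δ B h
  induction h with
  | top => exact .refl
  | and _ _ ih1 ih2 => exact .and ih1 ih2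
  | arrow _ ih => exact .trans .topArrow (.arrow .top ih)
  | rcd _ ih => exact .trans .topRcd (.rcd ih)
  | all _ ih => exact .trans .topAll (.all .refl ih)
  | tvar hm hbl => exact .topVar hm (bl_dsub hbl)

theorem spl_dsub : ∀ {A A1 A2 : Ty}, Spl A A1 A2 → ∀ {Δ}, DSub Δ (.and A1 A2) A := by
  intro A A1 A2 h
  induction h with
  | and => intro Δ; exact .refl
  | arrow _ ih => intro Δ; exact .trans .distArrow (.arrow .refl ih)
  | rcd _ ih => intro Δ; exact .trans .distRcd (.rcd ih)
  | all _ ih => intro Δ; exact .trans .distAll (.all .refl ih)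

/-- Soundness of algorithmic subtyping. -/
theorem asub_dsub : ∀ {Δ A B}, ASub Δ A B → DSub Δ A B := by
  intro Δ A B h
  induction h with
  | and sp _ _ ih1 ih2 => exact .trans (.and ih1 ih2) (spl_dsub sp)
  | int => exact .refl
  | var => exact .refl
  | bot _ => exact .bot
  | top _ htl => exact .trans .top (tl_dsub htl)
  | andl _ _ ih => exact .trans .andl ih
  | andr _ _ ih => exact .trans .andr ih
  | arrow _ _ _ ih1 ih2 => exact .arrow ih1 ih2
  | rcd _ _ ih => exact .rcd ih
  | all _ _ _ ih1 ih2 => exact .all ih1 ih2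

theorem cast_main :
    ∀ n {v A B}, Value v → Typing [] [] v .inf A → ASub [] A B →
      tsize B + esize v ≤ n → ∃ v', Cast v B v' := by
  intro n
  induction n with
  | zero =>
    intro v A B _ _ _ hsz
    have := tsize_pos B; have := esize_pos v; omega
  | succ n ih =>
    intro v A B hv h1 hsub hsz
    rcases ord_or_spl B with hB | ⟨B1, B2, sp⟩
    · by_cases hTL : TL [] B
      · exact ⟨TLVal B, .top hB hTL⟩
      · cases hv with
        | chk hp =>
          cases hp with
          | lam => cases h1
          | tabs => cases h1
          | rcd => cases h1
        | anno hp =>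
          cases h1 with
          | anno _ _ => exact ⟨_, .anno hp hB hTL (asub_dsub hsub)⟩
        | lit =>
          cases h1 with
          | lit _ _ =>
            cases hsub with
            | int => exact ⟨_, .int⟩
            | top _ htl => exact absurd htl hTL
            | and sp _ _ => exact absurd hB (spl_ord sp)
        | top =>
          cases h1 with
          | top _ _ =>
            cases hsub with
            | top _ htl => exact absurd htl hTL
            | and sp _ _ => exact absurd hB (spl_ord sp)
        | @merge v1 v2 hv1 hv2 =>
          have hsz1 : tsize B + esize v1 ≤ n := by
            have := esize_pos v2; simp [esize] at hsz; omega
          have hsz2 : tsize B + esize v2 ≤ n := by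
            have := esize_pos v1; simp [esize] at hsz; omega
          cases h1 with
          | merge t1 t2 _ =>
            cases hsub with
            | top _ htl => exact absurd htl hTL
            | and sp _ _ => exact absurd hB (spl_ord sp)
            | andl _ h =>
              obtain ⟨v', c⟩ := ih hv1 t1 h hsz1
              exact ⟨v', .mergel hB c⟩
            | andr _ h =>
              obtain ⟨v', c⟩ := ih hv2 t2 h hsz2
              exact ⟨v', .merger hB c⟩
          | mergev _ _ _ t1 t2 =>
            cases hsub with
            | top _ htl => exact absurd htl hTL
            | and sp _ _ => exact absurd hB (spl_ord sp)
            | andl _ h =>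
              obtain ⟨v', c⟩ := ih hv1 t1 h hsz1
              exact ⟨v', .mergel hB c⟩
            | andr _ h =>
              obtain ⟨v', c⟩ := ih hv2 t2 h hsz2
              exact ⟨v', .merger hB c⟩
    · obtain ⟨d1, d2⟩ := and_inv hsub sp
      have hs := spl_size sp
      obtain ⟨w1, c1⟩ := ih hv h1 d1 (by omega)
      obtain ⟨w2, c2⟩ := ih hv h1 d2 (by omega)
      exact ⟨.merge w1 w2, .and sp c1 c2⟩

theorem chk_progress_aux :
    ∀ {Δ Γ v m B}, Typing Δ Γ v m B → Δ = [] → Γ = [] → m = .chk →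
      Value v → (∃ A, Typing [] [] v .inf A) → ∃ v', Cast v B v' := by
  intro Δ Γ v m B h
  induction h with
  | abs _ _ _ _ =>
    rintro rfl rfl _ _ ⟨A', h1⟩; cases h1
  | tabs _ _ _ =>
    rintro rfl rfl _ _ ⟨A', h1⟩; cases h1
  | rcd _ _ =>
    rintro rfl rfl _ _ ⟨A', h1⟩; cases h1
  | inter _ _ ih1 ih2 =>
    rintro rfl rfl _ hv hA
    obtain ⟨w1, c1⟩ := ih1 rfl rfl rfl hv hA
    obtain ⟨w2, c2⟩ := ih2 rfl rfl rfl hv hA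
    exact ⟨.merge w1 w2, .and .and c1 c2⟩
  | @sub _ _ e A B hinf hd _ =>
    rintro rfl rfl _ hv _
    exact cast_main (tsize B + esize e) hv hinf (dsub_asub hd) le_rfl
  | top _ _ => rintro _ _ hm; exact Mode.noConfusion hm
  | lit _ _ => rintro _ _ hm; exact Mode.noConfusion hm
  | var _ _ _ => rintro _ _ hm; exact Mode.noConfusion hm
  | app _ _ _ _ _ => rintro _ _ hm; exact Mode.noConfusion hm
  | tapp _ _ _ _ _ => rintro _ _ hm; exact Mode.noConfusion hm
  | proj _ _ _ => rintro _ _ hm; exact Mode.noConfusion hm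
  | merge _ _ _ _ _ => rintro _ _ hm; exact Mode.noConfusion hm
  | mergev _ _ _ _ _ _ _ => rintro _ _ hm; exact Mode.noConfusion hm
  | fix _ _ _ => rintro _ _ hm; exact Mode.noConfusion hm
  | anno _ _ _ => rintro _ _ hm; exact Mode.noConfusion hm

/-- Progress of casting. -/
theorem casting_progress (v : Exp) (A B : Ty)
    (hv : Value v) (h1 : Typing [] [] v .inf A) (h2 : Typing [] [] v .chk B) :
    ∃ v', Cast v B v' := chk_progress_aux h2 rfl rfl rfl hv ⟨A, h1⟩
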